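/- For every dynamic logic program P without strong negation, the extended WS-models, the extended RD-models, the WS-models and the RD-models of P all coincide: WS'(P) = RD'(P) = WSd(P) = RD(P). -/

import Mathlib

namespace RuleUpdates

/-- Objective literal: an atom (a natural number) or its strong negation. -/
inductive OLit where
  | pos : ℕ → OLit
  | neg : ℕ → OLit
deriving DecidableEq

/-- Strong negation on objective literals (with ¬¬p identified with p). -/
def OLit.compl : OLit → OLit
  | .pos p => .neg p
  | .neg p => .pos p

/-- Literal: an objective literal or its default negation (not not l = l). -/
inductive Lit where
  | obj : OLit → Lit
  | ndef : OLit → Lit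
deriving DecidableEq

/-- Extended rule: a head literal and a finite set of body literals. -/
structure Rule where
  head : Lit
  body : Finset Lit

/-- Interpretation: a consistent set of objective literals. -/
def Interp (J : Set OLit) : Prop :=
  ∀ p : ℕ, ¬ (OLit.pos p ∈ J ∧ OLit.neg p ∈ J)

/-- Satisfaction of a literal. -/
def satLit (J : Set OLit) : Lit → Prop
  | .obj l => l ∈ J
  | .ndef l => l ∉ J

/-- Satisfaction of a set of body literals. -/
def satBody (J : Set OLit) (B : Finset Lit) : Prop :=
  ∀ L ∈ B, satLit J L

/-- Satisfaction of a rule. -/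
def satRule (J : Set OLit) (π : Rule) : Prop :=
  satBody J π.body → satLit J π.head

/-- J is a model of a program. -/
def isModel (J : Set OLit) (P : Set Rule) : Prop :=
  ∀ π ∈ P, satRule J π

/-- J* = J ∪ { not l | l ∈ ℒ ∖ J }, as a set of literals. -/
def star (J : Set OLit) : Set Lit :=
  {L | ∃ l : OLit, (L = Lit.obj l ∧ l ∈ J) ∨ (L = Lit.ndef l ∧ l ∉ J)}

/-- def(J) = { (not l.) | l ∈ ℒ ∖ J }. -/
def defFacts (J : Set OLit) : Set Rule :=
  {π | ∃ l : OLit, l ∉ J ∧ π = ⟨Lit.ndef l, ∅⟩}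

/-- S (a set of literals) is closed under program P, all literals
treated as distinct propositional atoms. -/
def closedUnder (P : Set Rule) (S : Set Lit) : Prop :=
  ∀ π ∈ P, (π.body : Set Lit) ⊆ S → π.head ∈ S

/-- least(P): the least model of P when all literals are treated as
distinct propositional atoms. -/
def leastModel (P : Set Rule) : Set Lit :=
  ⋂₀ {S | closedUnder P S}

/-- Stable model of an extended program: J* = least(P ∪ def(J)). -/
def isStableModel (P : Set Rule) (J : Set OLit) : Prop :=
  Interp J ∧ star J = leastModel (P ∪ defFacts J)

/-- Level of a literal, with ℓ(not l) = ℓ(l). -/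
def litLevel (ℓ : OLit → ℕ) : Lit → ℕ
  | .obj l => ℓ l
  | .ndef l => ℓ l

/-- ℓ↑(S): the maximal level of a literal in the finite set S. -/
def supLevel (ℓ : OLit → ℕ) (S : Finset Lit) : ℕ :=
  S.sup (litLevel ℓ)

/-- ℓ↓(S): the minimal level of a literal in the finite set S. -/
noncomputable def infLevel (ℓ : OLit → ℕ) (S : Finset Lit) : ℕ :=
  sInf (litLevel ℓ '' (S : Set Lit))

/-- Well-supported model of an extended program w.r.t. a level mapping ℓ. -/
def isWSModelWith (P : Set Rule) (J : Set OLit) (ℓ : OLit → ℕ) : Prop :=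
  isModel J P ∧
    ∀ l ∈ J, ∃ π ∈ P, π.head = Lit.obj l ∧ satBody J π.body ∧
      supLevel ℓ π.body < ℓ l

/-- Well-supported model of an extended program. -/
def isWSModel (P : Set Rule) (J : Set OLit) : Prop :=
  Interp J ∧ ∃ ℓ : OLit → ℕ, isWSModelWith P J ℓ

/-- con(L): the literals in conflict with L. -/
def con : Lit → Finset Lit
  | .obj l => {Lit.ndef l, Lit.obj l.compl}
  | .ndef l => {Lit.obj l}

/-- ρ(P): all rules occurring in the components of the DLP. -/
def allRules {n : ℕ} (P : Fin n → Set Rule) : Set Rule :=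
  {π | ∃ i : Fin n, π ∈ P i}

/-- The rule π ∈ P i is rejected w.r.t. the set of literals S:
some later σ with conflicting head has its body included in S. -/
def rejIn {n : ℕ} (P : Fin n → Set Rule) (S : Set Lit) (i : Fin n) (π : Rule) : Prop :=
  ∃ j : Fin n, i < j ∧ ∃ σ ∈ P j, σ.head ∈ con π.head ∧ (σ.body : Set Lit) ⊆ S

/-- rem(P, S) = ρ(P) ∖ rej(P, S), as a set of component-indexed rules. -/
def remSet {n : ℕ} (P : Fin n → Set Rule) (S : Set Lit) : Set (Fin n × Rule) :=
  {x | x.2 ∈ P x.1 ∧ ¬ rejIn P S x.1 x.2}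

/-- The operator T_{P,J}. -/
def TOp {n : ℕ} (P : Fin n → Set Rule) (J : Set OLit) (S : Set Lit) : Set Lit :=
  {L | ((∃ x ∈ remSet P (star J), x.2.head = L ∧ (x.2.body : Set Lit) ⊆ S) ∨
        (∃ l : OLit, l ∉ J ∧ L = Lit.ndef l)) ∧
       ¬ ∃ σ ∈ remSet P S, σ.2.head ∈ con L ∧ (σ.2.body : Set Lit) ⊆ star J}

/-- Iterates of T_{P,J} starting from ∅. -/
def TIter {n : ℕ} (P : Fin n → Set Rule) (J : Set OLit) : ℕ → Set Lit
  | 0 => ∅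
  | k + 1 => TOp P J (TIter P J k)

/-- Extended RD-model of a DLP: J* = ⋃_{k≥0} T_{P,J}^k(∅). -/
def isExtRD {n : ℕ} (P : Fin n → Set Rule) (J : Set OLit) : Prop :=
  Interp J ∧ star J = ⋃ k : ℕ, TIter P J k

/-- rej^ℓ(P, J): π ∈ P i is rejected w.r.t. J and the level mapping ℓ. -/
def rejLvl {n : ℕ} (P : Fin n → Set Rule) (J : Set OLit) (ℓ : OLit → ℕ)
    (i : Fin n) (π : Rule) : Prop :=
  ∃ j : Fin n, i < j ∧ ∃ σ ∈ P j, σ.head ∈ con π.head ∧ satBody J σ.body ∧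
    supLevel ℓ σ.body < infLevel ℓ (con π.head)

/-- Extended WS-model of a DLP. -/
def isExtWS {n : ℕ} (P : Fin n → Set Rule) (J : Set OLit) : Prop :=
  Interp J ∧ ∃ ℓ : OLit → ℕ,
    (∀ i : Fin n, ∀ π ∈ P i, ¬ rejLvl P J ℓ i π → satRule J π) ∧
    (∀ l ∈ J, ∃ x ∈ remSet P (star J), x.2.head = Lit.obj l ∧ satBody J x.2.body ∧
      supLevel ℓ x.2.body < ℓ l)

/-- A program is acyclic w.r.t. a level mapping ℓ. -/
def acyclicWrt (Q : Set Rule) (ℓ : OLit → ℕ) : Prop :=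
  (∀ l : OLit, ℓ l = ℓ l.compl) ∧ ∀ π ∈ Q, supLevel ℓ π.body < litLevel ℓ π.head

/-- The objective literal underlying a literal. -/
def Lit.olit : Lit → OLit
  | .obj l => l
  | .ndef l => l

/-- An objective literal is an atom (no strong negation). -/
def OLit.isAtom : OLit → Prop
  | .pos _ => True
  | .neg _ => False

/-- A rule without strong negation. -/
def noStrongRule (π : Rule) : Prop :=
  π.head.olit.isAtom ∧ ∀ L ∈ π.body, L.olit.isAtom

/-- A DLP without strong negation. -/
def noStrongDLP {n : ℕ} (P : Fin n → Set Rule) : Prop :=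
  ∀ i : Fin n, ∀ π ∈ P i, noStrongRule π

/-- Default negation on literals: not H(π), with double negation absorbed. -/
def Lit.swap : Lit → Lit
  | .obj l => .ndef l
  | .ndef l => .obj l

/-- J* for interpretations over atoms: J ∪ { not p | p ∈ 𝒜 ∖ J }. -/
def starA (J : Set OLit) : Set Lit :=
  {L | ∃ p : ℕ, (L = Lit.obj (OLit.pos p) ∧ OLit.pos p ∈ J) ∨
                 (L = Lit.ndef (OLit.pos p) ∧ OLit.pos p ∉ J)}

/-- Rej(P, J): π ∈ P i is rejected by some σ ∈ P j with i ≤ j whose head is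
not H(π) and whose body is satisfied by J. -/
def RejRD {n : ℕ} (P : Fin n → Set Rule) (J : Set OLit) (i : Fin n) (π : Rule) : Prop :=
  ∃ j : Fin n, i ≤ j ∧ ∃ σ ∈ P j, σ.head = π.head.swap ∧ satBody J σ.body

/-- Def(P, J) = { (not p.) | p ∈ 𝒜, no π ∈ ρ(P) with H(π) = p and J ⊨ B(π) }. -/
def DefRD {n : ℕ} (P : Fin n → Set Rule) (J : Set OLit) : Set Rule :=
  {ρ | ∃ p : ℕ, ρ = ⟨Lit.ndef (OLit.pos p), ∅⟩ ∧
    ¬ ∃ i : Fin n, ∃ π ∈ P i, π.head = Lit.obj (OLit.pos p) ∧ satBody J π.body}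

/-- RD-model of a DLP without strong negation. -/
def isRD {n : ℕ} (P : Fin n → Set Rule) (J : Set OLit) : Prop :=
  (∀ l ∈ J, ∃ p : ℕ, l = OLit.pos p) ∧
  starA J = leastModel ({π | ∃ i : Fin n, π ∈ P i ∧ ¬ RejRD P J i π} ∪ DefRD P J)

/-- Rej^ℓ(P, J) for DLPs without strong negation. -/
def RejWSd {n : ℕ} (P : Fin n → Set Rule) (J : Set OLit) (ℓ : OLit → ℕ)
    (i : Fin n) (π : Rule) : Prop :=
  ∃ j : Fin n, i < j ∧ ∃ σ ∈ P j, σ.head = π.head.swap ∧ satBody J σ.body ∧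
    supLevel ℓ σ.body < litLevel ℓ π.head

/-- WS-model of a DLP without strong negation. -/
def isWSd {n : ℕ} (P : Fin n → Set Rule) (J : Set OLit) : Prop :=
  (∀ l ∈ J, ∃ p : ℕ, l = OLit.pos p) ∧ ∃ ℓ : OLit → ℕ,
    (∀ i : Fin n, ∀ π ∈ P i, ¬ RejWSd P J ℓ i π → satRule J π) ∧
    (∀ l ∈ J, ∃ i : Fin n, ∃ π ∈ P i, ¬ RejWSd P J ℓ i π ∧ π.head = Lit.obj l ∧
      satBody J π.body ∧ supLevel ℓ π.body < litLevel ℓ π.head)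

/-! ### Auxiliary development -/

open Classical in
noncomputable def tlit (J : Set OLit) (l : OLit) : Lit :=
  if l ∈ J then Lit.obj l else Lit.ndef l

@[simp] lemma satLit_obj {J : Set OLit} {l : OLit} : satLit J (Lit.obj l) ↔ l ∈ J := Iff.rfl
@[simp] lemma satLit_ndef {J : Set OLit} {l : OLit} : satLit J (Lit.ndef l) ↔ l ∉ J := Iff.rfl

@[simp] lemma obj_mem_star {J : Set OLit} {l : OLit} : Lit.obj l ∈ star J ↔ l ∈ J := by
  constructor
  · rintro ⟨l', (⟨h1, h2⟩ | ⟨h1, h2⟩)⟩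
    · cases h1; exact h2
    · cases h1
  · exact fun h => ⟨l, Or.inl ⟨rfl, h⟩⟩

@[simp] lemma ndef_mem_star {J : Set OLit} {l : OLit} : Lit.ndef l ∈ star J ↔ l ∉ J := by
  constructor
  · rintro ⟨l', (⟨h1, h2⟩ | ⟨h1, h2⟩)⟩
    · cases h1
    · cases h1; exact h2
  · exact fun h => ⟨l, Or.inr ⟨rfl, h⟩⟩

lemma mem_star_iff_satLit {J : Set OLit} {L : Lit} : L ∈ star J ↔ satLit J L := by
  cases L <;> simp

lemma coe_subset_star {J : Set OLit} {B : Finset Lit} :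
    (↑B : Set Lit) ⊆ star J ↔ satBody J B := by
  constructor
  · intro hs L hL; exact mem_star_iff_satLit.1 (hs hL)
  · intro hs L hL; exact mem_star_iff_satLit.2 (hs L hL)

lemma tlit_mem_star {J : Set OLit} (l : OLit) : tlit J l ∈ star J := by
  unfold tlit; split <;> simp [*]

lemma eq_tlit_of_mem_star {J : Set OLit} {L : Lit} (hL : L ∈ star J) :
    L = tlit J L.olit := by
  cases L with
  | obj l => simp only [obj_mem_star] at hL; simp [tlit, Lit.olit, hL]
  | ndef l => simp only [ndef_mem_star] at hL; simp [tlit, Lit.olit, hL]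

/-- Atoms: olits of the form pos p. -/
lemma exists_pos_of_isAtom {l : OLit} (h : l.isAtom) : ∃ p, l = OLit.pos p := by
  cases l with
  | pos p => exact ⟨p, rfl⟩
  | neg p => exact absurd h (by simp [OLit.isAtom])

@[simp] lemma olit_obj (l : OLit) : (Lit.obj l).olit = l := rfl
@[simp] lemma olit_ndef (l : OLit) : (Lit.ndef l).olit = l := rfl
@[simp] lemma swap_obj (l : OLit) : (Lit.obj l).swap = Lit.ndef l := rfl
@[simp] lemma swap_ndef (l : OLit) : (Lit.ndef l).swap = Lit.obj l := rfl
@[simp] lemma litLevel_obj (ℓ : OLit → ℕ) (l : OLit) : litLevel ℓ (Lit.obj l) = ℓ l := rfl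
@[simp] lemma litLevel_ndef (ℓ : OLit → ℕ) (l : OLit) : litLevel ℓ (Lit.ndef l) = ℓ l := rfl

lemma litLevel_swap (ℓ : OLit → ℕ) (L : Lit) : litLevel ℓ L.swap = litLevel ℓ L := by
  cases L <;> rfl

lemma litLevel_olit (ℓ : OLit → ℕ) (L : Lit) : litLevel ℓ L = ℓ L.olit := by
  cases L <;> rfl

lemma swap_mem_con (L : Lit) : L.swap ∈ con L := by
  cases L <;> simp [con, Lit.swap]

lemma eq_swap_of_mem_con {L M : Lit} (hL : L.olit.isAtom) (hM : M.olit.isAtom)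
    (h : M ∈ con L) : M = L.swap := by
  cases L with
  | obj l =>
    simp only [con, Finset.mem_insert, Finset.mem_singleton] at h
    rcases h with h | h
    · simpa [Lit.swap] using h
    · subst h
      obtain ⟨p, rfl⟩ := exists_pos_of_isAtom hL
      exact absurd hM (by simp [OLit.compl, Lit.olit, OLit.isAtom])
  | ndef l =>
    simp only [con, Finset.mem_singleton] at h
    simpa [Lit.swap] using h

lemma infLevel_con_le (ℓ : OLit → ℕ) (L : Lit) :
    infLevel ℓ (con L) ≤ litLevel ℓ L := by
  have : litLevel ℓ L ∈ litLevel ℓ '' (↑(con L) : Set Lit) :=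
    ⟨L.swap, by simpa using swap_mem_con L, litLevel_swap ℓ L⟩
  exact Nat.sInf_le this

/-- Make a level mapping compl-invariant without changing it on atoms. -/
def atomize (ℓ : OLit → ℕ) : OLit → ℕ
  | .pos p => ℓ (.pos p)
  | .neg p => ℓ (.pos p)

lemma atomize_compl (ℓ : OLit → ℕ) (l : OLit) : atomize ℓ l = atomize ℓ l.compl := by
  cases l <;> rfl

lemma atomize_pos (ℓ : OLit → ℕ) (p : ℕ) : atomize ℓ (OLit.pos p) = ℓ (OLit.pos p) := rfl

lemma litLevel_atomize {ℓ : OLit → ℕ} {L : Lit} (hL : L.olit.isAtom) :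
    litLevel (atomize ℓ) L = litLevel ℓ L := by
  obtain ⟨p, hp⟩ := exists_pos_of_isAtom hL
  cases L with
  | obj l => simp only [olit_obj] at hp; subst hp; rfl
  | ndef l => simp only [olit_ndef] at hp; subst hp; rfl

lemma supLevel_atomize {ℓ : OLit → ℕ} {B : Finset Lit} (hB : ∀ L ∈ B, L.olit.isAtom) :
    supLevel (atomize ℓ) B = supLevel ℓ B :=
  Finset.sup_congr rfl fun L hL => litLevel_atomize (hB L hL)

lemma infLevel_con_atomize (ℓ : OLit → ℕ) (L : Lit) :
    infLevel (atomize ℓ) (con L) = litLevel (atomize ℓ) L := by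
  have hinv := atomize_compl ℓ
  cases L with
  | obj l =>
    have himg : litLevel (atomize ℓ) '' (↑(con (Lit.obj l)) : Set Lit) = {atomize ℓ l} := by
      ext m
      simp only [con, Finset.coe_insert, Finset.coe_singleton, Set.image_insert_eq,
        Set.image_singleton, litLevel_ndef, litLevel_obj, Set.mem_insert_iff,
        Set.mem_singleton_iff]
      constructor
      · rintro (rfl | rfl)
        · rfl
        · exact (hinv l).symm
      · rintro rfl; exact Or.inl rfl
    simp [infLevel, himg]
  | ndef l =>
    have himg : litLevel (atomize ℓ) '' (↑(con (Lit.ndef l)) : Set Lit) = {atomize ℓ l} := by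
      simp [con]
    simp [infLevel, himg]

lemma supLevel_lt_of {ℓ : OLit → ℕ} {B : Finset Lit} {m : ℕ} (hm : 0 < m)
    (h : ∀ L ∈ B, litLevel ℓ L < m) : supLevel ℓ B < m :=
  (Finset.sup_lt_iff hm).2 h

lemma litLevel_lt_of_supLevel {ℓ : OLit → ℕ} {B : Finset Lit} {m : ℕ} {L : Lit}
    (hL : L ∈ B) (h : supLevel ℓ B < m) : litLevel ℓ L < m :=
  lt_of_le_of_lt (Finset.le_sup hL) h

/-! ### starA lemmas -/

lemma mem_starA_iff {J : Set OLit} {L : Lit} (hL : L.olit.isAtom) :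
    L ∈ starA J ↔ satLit J L := by
  obtain ⟨p, hp⟩ := exists_pos_of_isAtom hL
  cases L with
  | obj l =>
    simp only [olit_obj] at hp; subst hp
    constructor
    · rintro ⟨q, (⟨h1, h2⟩ | ⟨h1, h2⟩)⟩
      · cases h1; exact h2
      · cases h1
    · exact fun hx => ⟨p, Or.inl ⟨rfl, hx⟩⟩
  | ndef l =>
    simp only [olit_ndef] at hp; subst hp
    constructor
    · rintro ⟨q, (⟨h1, h2⟩ | ⟨h1, h2⟩)⟩
      · cases h1
      · cases h1; exact h2
    · exact fun hx => ⟨p, Or.inr ⟨rfl, hx⟩⟩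

lemma of_mem_starA {J : Set OLit} {L : Lit} (hL : L ∈ starA J) :
    L.olit.isAtom ∧ satLit J L := by
  rcases hL with ⟨p, (⟨h1, h2⟩ | ⟨h1, h2⟩)⟩ <;> subst h1 <;>
    exact ⟨by simp [Lit.olit, OLit.isAtom], by simpa⟩

lemma interp_of_atomic {J : Set OLit} (hJ : ∀ l ∈ J, ∃ p : ℕ, l = OLit.pos p) :
    Interp J := by
  intro p ⟨_, hneg⟩
  obtain ⟨q, hq⟩ := hJ _ hneg
  cases hq

/-! ### Descent lemma -/

lemma exists_unrejected {n : ℕ} (P : Fin n → Set Rule) (Spec : Rule → Prop)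
    (Bad : Fin n → Rule → Prop)
    (step : ∀ i : Fin n, ∀ π ∈ P i, Spec π → Bad i π →
      ∃ j : Fin n, i < j ∧ ∃ π' ∈ P j, Spec π') :
    ∀ i : Fin n, ∀ π ∈ P i, Spec π →
      ∃ i' : Fin n, ∃ π' ∈ P i', Spec π' ∧ ¬ Bad i' π' := by
  suffices H : ∀ k : ℕ, ∀ i : Fin n, n - i.val ≤ k → ∀ π ∈ P i, Spec π →
      ∃ i' : Fin n, ∃ π' ∈ P i', Spec π' ∧ ¬ Bad i' π' by
    exact fun i π hπ hs => H n i (Nat.sub_le _ _) π hπ hs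
  intro k
  induction k with
  | zero => intro i hi; have := i.isLt; omega
  | succ k ih =>
    intro i hi π hπ hs
    by_cases hb : Bad i π
    · obtain ⟨j, hij, π', hπ', hs'⟩ := step i π hπ hs hb
      have hij' : i.val < j.val := hij
      exact ih j (by have := j.isLt; omega) π' hπ' hs'
    · exact ⟨i, π, hπ, hs, hb⟩

/-! ### Kleene iteration for leastModel -/

def KIter (Q : Set Rule) : ℕ → Set Lit
  | 0 => ∅
  | k + 1 => KIter Q k ∪ {L | ∃ π ∈ Q, π.head = L ∧ (↑π.body : Set Lit) ⊆ KIter Q k}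

lemma KIter_mono (Q : Set Rule) : Monotone (KIter Q) := by
  apply monotone_nat_of_le_succ
  intro k
  exact Set.subset_union_left

lemma leastModel_closed (Q : Set Rule) : closedUnder Q (leastModel Q) := by
  intro π hπ hb S hS
  exact hS π hπ fun L hL => (hb hL) S hS

lemma leastModel_le {Q : Set Rule} {S : Set Lit} (hS : closedUnder Q S) :
    leastModel Q ⊆ S :=
  Set.sInter_subset_of_mem hS

lemma KIter_subset_least (Q : Set Rule) : ∀ k, KIter Q k ⊆ leastModel Q := by
  intro k
  induction k with
  | zero => simp [KIter]
  | succ k ih =>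
    intro L hL
    rcases hL with hL | ⟨π, hπ, hhead, hbody⟩
    · exact ih hL
    · exact hhead ▸ leastModel_closed Q π hπ (fun L' hL' => ih (hbody hL'))

lemma finset_stage {T : ℕ → Set Lit} (hT : Monotone T) (B : Finset Lit)
    (h : ∀ L ∈ B, ∃ k, L ∈ T k) : ∃ k, (↑B : Set Lit) ⊆ T k := by
  classical
  induction B using Finset.induction with
  | empty => exact ⟨0, by simp⟩
  | @insert a s ha ih =>
    obtain ⟨k1, hk1⟩ := h a (Finset.mem_insert_self a s)
    obtain ⟨k2, hk2⟩ := ih fun L hL => h L (Finset.mem_insert_of_mem hL)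
    refine ⟨max k1 k2, ?_⟩
    rw [Finset.coe_insert, Set.insert_subset_iff]
    exact ⟨hT (le_max_left k1 k2) hk1, fun L hL => hT (le_max_right k1 k2) (hk2 hL)⟩

lemma leastModel_eq_iUnion (Q : Set Rule) : leastModel Q = ⋃ k, KIter Q k := by
  apply Set.Subset.antisymm
  · apply leastModel_le
    intro π hπ hb
    obtain ⟨k, hk⟩ := finset_stage (KIter_mono Q) π.body
      (fun L hL => Set.mem_iUnion.1 (hb hL))
    exact Set.mem_iUnion.2 ⟨k + 1, Or.inr ⟨π, hπ, rfl, hk⟩⟩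
  · exact Set.iUnion_subset (KIter_subset_least Q)

lemma finset_persist {T : ℕ → Set Lit} (B : Finset Lit)
    (h : ∀ L ∈ B, ∃ k, ∀ k' ≥ k, L ∈ T k') :
    ∃ k, ∀ k' ≥ k, (↑B : Set Lit) ⊆ T k' := by
  classical
  induction B using Finset.induction with
  | empty => exact ⟨0, by simp⟩
  | @insert a s ha ih =>
    obtain ⟨k1, hk1⟩ := h a (Finset.mem_insert_self a s)
    obtain ⟨k2, hk2⟩ := ih fun L hL => h L (Finset.mem_insert_of_mem hL)
    refine ⟨max k1 k2, fun k' hk' => ?_⟩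
    rw [Finset.coe_insert, Set.insert_subset_iff]
    exact ⟨hk1 k' (le_trans (le_max_left _ _) hk'),
      hk2 k' (le_trans (le_max_right _ _) hk')⟩

/-! ### Shared helpers for WSd -/

section
variable {n : ℕ} {P : Fin n → Set Rule} {J : Set OLit} {ℓ : OLit → ℕ}

lemma reject_of_unsat (Hmod : ∀ i : Fin n, ∀ π ∈ P i, ¬ RejWSd P J ℓ i π → satRule J π)
    {j : Fin n} {σ : Rule} (hσ : σ ∈ P j) (hb : satBody J σ.body)
    (hh : ¬ satLit J σ.head) : RejWSd P J ℓ j σ := by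
  by_contra hc
  exact hh (Hmod j σ hσ hc hb)

lemma support_remSet (h : noStrongDLP P)
    (Hmod : ∀ i : Fin n, ∀ π ∈ P i, ¬ RejWSd P J ℓ i π → satRule J π)
    {l : OLit} (hl : l ∈ J)
    {i : Fin n} {π : Rule} (hπ : π ∈ P i) (hhead : π.head = Lit.obj l)
    (hb : satBody J π.body) (hsup : supLevel ℓ π.body < ℓ l) :
    ∃ x ∈ remSet P (star J), x.2.head = Lit.obj l ∧ satBody J x.2.body ∧
      supLevel ℓ x.2.body < ℓ l := by
  have main := exists_unrejected P
    (fun π => π.head = Lit.obj l ∧ satBody J π.body ∧ supLevel ℓ π.body < ℓ l)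
    (rejIn P (star J)) ?_ i π hπ ⟨hhead, hb, hsup⟩
  · obtain ⟨i', π', hπ', ⟨hh, hsb, hsl⟩, hnb⟩ := main
    exact ⟨(i', π'), ⟨hπ', hnb⟩, hh, hsb, hsl⟩
  · rintro i π hπ ⟨hh, _, _⟩ ⟨j, hij, σ, hσ, hcon, hbs⟩
    have hσsw : σ.head = π.head.swap :=
      eq_swap_of_mem_con (h i π hπ).1 (h j σ hσ).1 hcon
    have hσh : σ.head = Lit.ndef l := by rw [hσsw, hh]; rfl
    have hsbσ : satBody J σ.body := coe_subset_star.1 hbs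
    have hrej : RejWSd P J ℓ j σ :=
      reject_of_unsat Hmod hσ hsbσ (by rw [hσh]; simp [hl])
    obtain ⟨k, hjk, τ, hτ, hτh, hτb, hτs⟩ := hrej
    refine ⟨k, lt_trans hij hjk, τ, hτ, ?_, hτb, ?_⟩
    · rw [hτh, hσh]; rfl
    · rw [hσh] at hτs; simpa using hτs

/-! ### Equivalence: extended WS = WSd -/

theorem extWS_iff_WSd (h : noStrongDLP P) : isExtWS P J ↔ isWSd P J := by
  constructor
  · rintro ⟨hInt, ℓ, Hmod, Hsup⟩
    have hAtom : ∀ l ∈ J, ∃ p : ℕ, l = OLit.pos p := by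
      intro l hl
      obtain ⟨x, hx, hhead, -⟩ := Hsup l hl
      have := (h x.1 x.2 hx.1).1
      rw [hhead] at this
      exact exists_pos_of_isAtom this
    refine ⟨hAtom, ℓ, ?_, ?_⟩
    · intro i π hπ hnr
      apply Hmod i π hπ
      rintro ⟨j, hij, σ, hσ, hcon, hsb, hlt⟩
      exact hnr ⟨j, hij, σ, hσ,
        eq_swap_of_mem_con (h i π hπ).1 (h j σ hσ).1 hcon, hsb,
        lt_of_lt_of_le hlt (infLevel_con_le ℓ π.head)⟩
    · intro l hl
      obtain ⟨x, hx, hhead, hsb, hsl⟩ := Hsup l hl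
      refine ⟨x.1, x.2, hx.1, ?_, hhead, hsb, by rw [hhead]; simpa using hsl⟩
      rintro ⟨j, hij, σ, hσ, hsw, hsb', -⟩
      exact hx.2 ⟨j, hij, σ, hσ, hsw ▸ swap_mem_con _, coe_subset_star.2 hsb'⟩
  · rintro ⟨hAtom, ℓ, Hmod, Hsup⟩
    refine ⟨interp_of_atomic hAtom, atomize ℓ, ?_, ?_⟩
    · intro i π hπ hnr
      apply Hmod i π hπ
      rintro ⟨j, hij, σ, hσ, hsw, hsb, hlt⟩
      apply hnr
      refine ⟨j, hij, σ, hσ, hsw ▸ swap_mem_con π.head, hsb, ?_⟩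
      rw [infLevel_con_atomize, supLevel_atomize (h j σ hσ).2,
        litLevel_atomize (h i π hπ).1]
      exact hlt
    · intro l hl
      obtain ⟨i, π, hπ, hnr, hhead, hsb, hsl⟩ := Hsup l hl
      have hsl' : supLevel ℓ π.body < ℓ l := by rw [hhead] at hsl; simpa using hsl
      obtain ⟨x, hx, hh, hb, hs⟩ := support_remSet h Hmod hl hπ hhead hsb hsl'
      refine ⟨x, hx, hh, hb, ?_⟩
      obtain ⟨p, rfl⟩ := hAtom l hl
      rw [supLevel_atomize (h x.1 x.2 hx.1).2, atomize_pos]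
      exact hs

end

lemma swap_swap (L : Lit) : L.swap.swap = L := by cases L <;> rfl

lemma satLit_tlit {J : Set OLit} (l : OLit) : satLit J (tlit J l) := by
  unfold tlit; split <;> simp [*]

lemma tlit_olit {J : Set OLit} (l : OLit) : (tlit J l).olit = l := by
  unfold tlit; split <;> rfl

lemma eq_tlit_of_satLit {J : Set OLit} {L : Lit} (h : satLit J L) :
    L = tlit J L.olit := by
  cases L with
  | obj l => simp only [satLit_obj] at h; simp [tlit, h]
  | ndef l => simp only [satLit_ndef] at h; simp [tlit, h]

section
variable {n : ℕ} {P : Fin n → Set Rule} {J : Set OLit} {ℓ : OLit → ℕ}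

lemma descentRD (h : noStrongDLP P)
    (Hmod : ∀ i : Fin n, ∀ π ∈ P i, ¬ RejWSd P J ℓ i π → satRule J π)
    {c : Lit} (hcs : ¬ satLit J c.swap)
    {i : Fin n} {π : Rule} (hπ : π ∈ P i) (hh : π.head = c)
    (hb : satBody J π.body) (hs : supLevel ℓ π.body < litLevel ℓ c) :
    ∃ i' : Fin n, ∃ π' ∈ P i', ¬ RejRD P J i' π' ∧ π'.head = c ∧
      satBody J π'.body ∧ supLevel ℓ π'.body < litLevel ℓ c := by
  have main := exists_unrejected P
    (fun π => π.head = c ∧ satBody J π.body ∧ supLevel ℓ π.body < litLevel ℓ c)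
    (RejRD P J) ?_ i π hπ ⟨hh, hb, hs⟩
  · obtain ⟨i', π', hπ', ⟨h1, h2, h3⟩, hnb⟩ := main
    exact ⟨i', π', hπ', hnb, h1, h2, h3⟩
  · rintro i π hπ ⟨hh, -, -⟩ ⟨j, hij, σ, hσ, hsw, hsb⟩
    have hσh : σ.head = c.swap := by rw [hsw, hh]
    have hrej := reject_of_unsat Hmod hσ hsb (hσh ▸ hcs)
    obtain ⟨k, hjk, τ, hτ, hτh, hτb, hτs⟩ := hrej
    refine ⟨k, lt_of_le_of_lt hij hjk, τ, hτ, ?_, hτb, ?_⟩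
    · rw [hτh, hσh, swap_swap]
    · rw [hσh, litLevel_swap] at hτs; exact hτs

/-! ### Equivalence: WSd = RD -/

theorem WSd_iff_RD (h : noStrongDLP P) : isWSd P J ↔ isRD P J := by
  constructor
  · rintro ⟨hAtom, ℓ, Hmod, Hsup⟩
    refine ⟨hAtom, ?_⟩
    set Q : Set Rule :=
      {π | ∃ i : Fin n, π ∈ P i ∧ ¬ RejRD P J i π} ∪ DefRD P J with hQdef
    have Hle : ∀ N : ℕ, ∀ p : ℕ, ℓ (OLit.pos p) ≤ N →
        (OLit.pos p ∈ J → Lit.obj (OLit.pos p) ∈ leastModel Q) ∧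
        (OLit.pos p ∉ J → Lit.ndef (OLit.pos p) ∈ leastModel Q) := by
      intro N
      induction N using Nat.strong_induction_on with
      | _ N IH =>
      intro p hp
      have bodyLM : ∀ {π' : Rule} {i' : Fin n}, π' ∈ P i' → satBody J π'.body →
          supLevel ℓ π'.body < ℓ (OLit.pos p) →
          (↑π'.body : Set Lit) ⊆ leastModel Q := by
        intro π' i' hπ' hsb' hsl' L hL
        have hLat : L.olit.isAtom := (h i' π' hπ').2 L hL
        obtain ⟨q, hq⟩ := exists_pos_of_isAtom hLat
        have hsat : satLit J L := hsb' L hL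
        have hlev : ℓ (OLit.pos q) < N := by
          have := litLevel_lt_of_supLevel hL hsl'
          rw [litLevel_olit, hq] at this
          omega
        cases L with
        | obj l =>
          simp only [olit_obj] at hq; subst hq
          exact (IH _ hlev q le_rfl).1 hsat
        | ndef l =>
          simp only [olit_ndef] at hq; subst hq
          exact (IH _ hlev q le_rfl).2 hsat
      constructor
      · intro hpJ
        obtain ⟨i, π, hπ, -, hh, hsb, hsl⟩ := Hsup (OLit.pos p) hpJ
        obtain ⟨i', π', hπ', hnRej, hh', hsb', hsl'⟩ :=
          descentRD h Hmod (c := Lit.obj (OLit.pos p)) (by simp [hpJ]) hπ hh hsb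
            (by rw [hh] at hsl; exact hsl)
        have hQ : π' ∈ Q := Or.inl ⟨i', hπ', hnRej⟩
        exact hh' ▸ leastModel_closed Q π' hQ
          (bodyLM hπ' hsb' (by simpa using hsl'))
      · intro hpN
        by_cases hC : ∃ i : Fin n, ∃ π ∈ P i,
            π.head = Lit.obj (OLit.pos p) ∧ satBody J π.body
        · obtain ⟨i, π, hπ, hh, hsb⟩ := hC
          have hrej := reject_of_unsat Hmod hπ hsb (by rw [hh]; simpa)
          obtain ⟨j, hij, σ, hσ, hσh, hσb, hσs⟩ := hrej
          have hσh' : σ.head = Lit.ndef (OLit.pos p) := by rw [hσh, hh]; rfl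
          obtain ⟨i', σ', hσ', hnRej, hh', hsb', hsl'⟩ :=
            descentRD h Hmod (c := Lit.ndef (OLit.pos p)) (by simpa) hσ hσh' hσb
              (by rw [hh] at hσs; simpa using hσs)
          have hQ : σ' ∈ Q := Or.inl ⟨i', hσ', hnRej⟩
          exact hh' ▸ leastModel_closed Q σ' hQ
            (bodyLM hσ' hsb' (by simpa using hsl'))
        · have hQ : (⟨Lit.ndef (OLit.pos p), ∅⟩ : Rule) ∈ Q := Or.inr ⟨p, rfl, hC⟩
          exact leastModel_closed Q _ hQ (by simp)
    apply Set.Subset.antisymm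
    · intro L hL
      obtain ⟨hLat, hsat⟩ := of_mem_starA hL
      obtain ⟨q, hq⟩ := exists_pos_of_isAtom hLat
      cases L with
      | obj l =>
        simp only [olit_obj] at hq; subst hq
        exact (Hle _ q le_rfl).1 hsat
      | ndef l =>
        simp only [olit_ndef] at hq; subst hq
        exact (Hle _ q le_rfl).2 hsat
    · apply leastModel_le
      rintro π (⟨i, hπ, hnRej⟩ | ⟨p, rfl, hnd⟩) hb
      · have hsb : satBody J π.body := fun L hL => (of_mem_starA (hb hL)).2
        have hnr : ¬ RejWSd P J ℓ i π := by
          rintro ⟨j, hij, σ, hσ, hsw, hsb', -⟩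
          exact hnRej ⟨j, le_of_lt hij, σ, hσ, hsw, hsb'⟩
        exact (mem_starA_iff (h i π hπ).1).2 (Hmod i π hπ hnr hsb)
      · have hpn : OLit.pos p ∉ J := by
          intro hpJ
          obtain ⟨i, π, hπ, -, hh, hsb, -⟩ := Hsup _ hpJ
          exact hnd ⟨i, π, hπ, hh, hsb⟩
        exact (mem_starA_iff (by simp [Lit.olit, OLit.isAtom])).2 (by simpa)
  · rintro ⟨hAtom, hEq⟩
    set Q : Set Rule :=
      {π | ∃ i : Fin n, π ∈ P i ∧ ¬ RejRD P J i π} ∪ DefRD P J with hQdef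
    set ℓ : OLit → ℕ := fun l => sInf {k | tlit J l ∈ KIter Q k} with hℓdef
    have hmemK : ∀ {L : Lit} {m : ℕ}, L ∈ KIter Q m → satLit J L ∧ L = tlit J L.olit := by
      intro L m hL
      have hLM : L ∈ starA J := by
        rw [hEq]; exact KIter_subset_least Q m hL
      have hsat := (of_mem_starA hLM).2
      exact ⟨hsat, eq_tlit_of_satLit hsat⟩
    have hstage : ∀ {L : Lit} {m : ℕ}, L ∈ KIter Q m → ℓ L.olit ≤ m := by
      intro L m hL
      have := (hmemK hL).2
      exact Nat.sInf_le (by rw [← this]; exact hL)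
    have entry : ∀ p : ℕ, 1 ≤ ℓ (OLit.pos p) ∧ ∃ π ∈ Q,
        π.head = tlit J (OLit.pos p) ∧
        (↑π.body : Set Lit) ⊆ KIter Q (ℓ (OLit.pos p) - 1) := by
      intro p
      have htl : tlit J (OLit.pos p) ∈ ⋃ k, KIter Q k := by
        rw [← leastModel_eq_iUnion, ← hEq]
        exact (mem_starA_iff (by rw [tlit_olit]; simp [OLit.isAtom])).2 (satLit_tlit _)
      obtain ⟨k, hk⟩ := Set.mem_iUnion.1 htl
      have hne : {k | tlit J (OLit.pos p) ∈ KIter Q k}.Nonempty := ⟨k, hk⟩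
      have hmem := Nat.sInf_mem hne
      have hmem' : tlit J (OLit.pos p) ∈ KIter Q (ℓ (OLit.pos p)) := hmem
      have h1 : 1 ≤ ℓ (OLit.pos p) := by
        rcases Nat.eq_zero_or_pos (ℓ (OLit.pos p)) with h0 | h0
        · rw [h0] at hmem'
          exact absurd hmem' (by simp [KIter])
        · exact h0
      refine ⟨h1, ?_⟩
      have hnotm : tlit J (OLit.pos p) ∉ KIter Q (ℓ (OLit.pos p) - 1) := by
        intro hc
        have hle : ℓ (OLit.pos p) ≤ ℓ (OLit.pos p) - 1 := Nat.sInf_le hc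
        omega
      obtain ⟨m, hm⟩ : ∃ m, ℓ (OLit.pos p) = m + 1 := ⟨ℓ (OLit.pos p) - 1, by omega⟩
      have hm' : ℓ (OLit.pos p) - 1 = m := by omega
      rw [hm'] at hnotm ⊢
      rw [hm] at hmem'
      rcases hmem' with hmem' | ⟨π, hπ, hh, hbody⟩
      · exact absurd hmem' hnotm
      · exact ⟨π, hπ, hh, hbody⟩
    refine ⟨hAtom, ℓ, ?_, ?_⟩
    · intro i π hπ hnr hsb
      by_contra hns
      obtain ⟨q, hq⟩ := exists_pos_of_isAtom (h i π hπ).1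
      obtain ⟨h1, τ, hτQ, hth, htb⟩ := entry q
      have hbsat : satBody J τ.body := fun L hL => (hmemK (htb hL)).1
      have hsupτ : supLevel ℓ τ.body < ℓ (OLit.pos q) := by
        apply supLevel_lt_of (by omega)
        intro L hL
        have := hstage (htb hL)
        rw [litLevel_olit]
        omega
      cases hhead : π.head with
      | obj l =>
        rw [hhead] at hq; simp only [olit_obj] at hq; subst hq
        rw [hhead] at hns; simp only [satLit_obj] at hns
        have hth' : τ.head = Lit.ndef (OLit.pos q) := by
          rw [hth]; simp [tlit, hns]
        rcases hτQ with ⟨j, hτ, hnRejτ⟩ | ⟨r, hτeq, hnd⟩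
        · have hij : i < j := by
            by_contra hle
            exact hnRejτ ⟨i, le_of_not_gt hle, π, hπ, by rw [hhead, hth']; rfl, hsb⟩
          exact hnr ⟨j, hij, τ, hτ, by rw [hth', hhead]; rfl, hbsat,
            by rw [hhead]; simpa using hsupτ⟩
        · subst hτeq
          have hrq : r = q := by simpa using hth'
          subst hrq
          exact hnd ⟨i, π, hπ, hhead, hsb⟩
      | ndef l =>
        rw [hhead] at hq; simp only [olit_ndef] at hq; subst hq
        rw [hhead] at hns; simp only [satLit_ndef, not_not] at hns
        have hth' : τ.head = Lit.obj (OLit.pos q) := by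
          rw [hth]; simp [tlit, hns]
        rcases hτQ with ⟨j, hτ, hnRejτ⟩ | ⟨r, hτeq, hnd⟩
        · have hij : i < j := by
            by_contra hle
            exact hnRejτ ⟨i, le_of_not_gt hle, π, hπ, by rw [hhead, hth']; rfl, hsb⟩
          exact hnr ⟨j, hij, τ, hτ, by rw [hth', hhead]; rfl, hbsat,
            by rw [hhead]; simpa using hsupτ⟩
        · subst hτeq
          exact absurd hth' (by simp)
    · intro l hl
      obtain ⟨p, rfl⟩ := hAtom l hl
      obtain ⟨h1, π, hπQ, hh, hbody⟩ := entry p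
      have hh' : π.head = Lit.obj (OLit.pos p) := by rw [hh]; simp [tlit, hl]
      rcases hπQ with ⟨i, hπ, hnRej⟩ | ⟨q, hπeq, -⟩
      · refine ⟨i, π, hπ, ?_, hh', ?_, ?_⟩
        · rintro ⟨j, hij, σ, hσ, hsw, hsb, -⟩
          exact hnRej ⟨j, le_of_lt hij, σ, hσ, hsw, hsb⟩
        · exact fun L hL => (hmemK (hbody hL)).1
        · rw [hh']
          apply supLevel_lt_of (by simpa using Nat.lt_of_lt_of_le Nat.zero_lt_one h1)
          intro L hL
          have := hstage (hbody hL)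
          rw [litLevel_olit]
          simp only [litLevel_obj]
          omega
      · subst hπeq
        exact absurd hh' (by simp)

end

/-! ### Equivalence: extended RD = WSd -/

section
variable {n : ℕ} {P : Fin n → Set Rule} {J : Set OLit}

theorem extRD_to_WSd (h : noStrongDLP P) (hRD : isExtRD P J) : isWSd P J := by
  obtain ⟨hInt, hEq⟩ := hRD
  have hAtom : ∀ l ∈ J, ∃ p : ℕ, l = OLit.pos p := by
    intro l hl
    cases l with
    | pos p => exact ⟨p, rfl⟩
    | neg p =>
      exfalso
      have hmem : Lit.obj (OLit.neg p) ∈ ⋃ k, TIter P J k := by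
        rw [← hEq]; simpa using hl
      obtain ⟨k, hk⟩ := Set.mem_iUnion.1 hmem
      cases k with
      | zero => exact hk
      | succ k =>
        obtain ⟨hd, -⟩ := hk
        rcases hd with ⟨x, hx, hhead, -⟩ | ⟨l', -, habs⟩
        · have := (h x.1 x.2 hx.1).1
          rw [hhead] at this
          exact this
        · exact absurd habs (by simp)
  set ℓ : OLit → ℕ := fun l => sInf {k | tlit J l ∈ TIter P J k} with hℓdef
  have hTsub : ∀ k, TIter P J k ⊆ star J := by
    intro k; rw [hEq]; exact Set.subset_iUnion _ k
  have hstage : ∀ {L : Lit} {m : ℕ}, L ∈ TIter P J m → satLit J L ∧ ℓ L.olit ≤ m := by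
    intro L m hL
    have hsat : satLit J L := mem_star_iff_satLit.1 (hTsub m hL)
    refine ⟨hsat, Nat.sInf_le ?_⟩
    show tlit J L.olit ∈ TIter P J m
    rw [← eq_tlit_of_satLit hsat]; exact hL
  have entry : ∀ l : OLit, 1 ≤ ℓ l ∧ tlit J l ∈ TOp P J (TIter P J (ℓ l - 1)) := by
    intro l
    have htl : tlit J l ∈ ⋃ k, TIter P J k := by rw [← hEq]; exact tlit_mem_star l
    obtain ⟨k, hk⟩ := Set.mem_iUnion.1 htl
    have hne : {k | tlit J l ∈ TIter P J k}.Nonempty := ⟨k, hk⟩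
    have hmem0 := Nat.sInf_mem hne
    have hmem : tlit J l ∈ TIter P J (ℓ l) := hmem0
    have h1 : 1 ≤ ℓ l := by
      rcases Nat.eq_zero_or_pos (ℓ l) with h0 | h0
      · rw [h0] at hmem; exact absurd hmem (by simp [TIter])
      · exact h0
    refine ⟨h1, ?_⟩
    obtain ⟨m, hm⟩ : ∃ m, ℓ l = m + 1 := ⟨ℓ l - 1, by omega⟩
    have hm' : ℓ l - 1 = m := by omega
    rw [hm']
    rw [hm] at hmem
    exact hmem
  refine ⟨hAtom, ℓ, ?_, ?_⟩
  · intro i π hπ hnr hsb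
    by_contra hns
    obtain ⟨q, hq⟩ := exists_pos_of_isAtom (h i π hπ).1
    obtain ⟨h1, hmem⟩ := entry (OLit.pos q)
    cases hhead : π.head with
    | obj l =>
      rw [hhead] at hq; simp only [olit_obj] at hq; subst hq
      rw [hhead] at hns; simp only [satLit_obj] at hns
      have htl : tlit J (OLit.pos q) = Lit.ndef (OLit.pos q) := by simp [tlit, hns]
      rw [htl] at hmem
      obtain ⟨-, hchk⟩ := hmem
      have hrej : rejIn P (TIter P J (ℓ (OLit.pos q) - 1)) i π := by
        by_contra hrem
        exact hchk ⟨(i, π), ⟨hπ, hrem⟩, by rw [hhead]; simp [con],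
          coe_subset_star.2 hsb⟩
      obtain ⟨j, hij, σ, hσ, hcon, hbs⟩ := hrej
      have hσh : σ.head = Lit.ndef (OLit.pos q) := by
        have := eq_swap_of_mem_con (h i π hπ).1 (h j σ hσ).1 hcon
        rw [this, hhead]; rfl
      apply hnr
      refine ⟨j, hij, σ, hσ, by rw [hσh, hhead]; rfl, ?_, ?_⟩
      · exact fun L hL => (hstage (hbs hL)).1
      · rw [hhead]
        apply supLevel_lt_of (by simpa using Nat.lt_of_lt_of_le Nat.zero_lt_one h1)
        intro L hL
        have := (hstage (hbs hL)).2
        rw [litLevel_olit]; simp only [litLevel_obj]; omega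
    | ndef l =>
      rw [hhead] at hq; simp only [olit_ndef] at hq; subst hq
      rw [hhead] at hns; simp only [satLit_ndef, not_not] at hns
      have htl : tlit J (OLit.pos q) = Lit.obj (OLit.pos q) := by simp [tlit, hns]
      rw [htl] at hmem
      obtain ⟨-, hchk⟩ := hmem
      have hrej : rejIn P (TIter P J (ℓ (OLit.pos q) - 1)) i π := by
        by_contra hrem
        exact hchk ⟨(i, π), ⟨hπ, hrem⟩, by rw [hhead]; simp [con],
          coe_subset_star.2 hsb⟩
      obtain ⟨j, hij, σ, hσ, hcon, hbs⟩ := hrej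
      have hσh : σ.head = Lit.obj (OLit.pos q) := by
        have := eq_swap_of_mem_con (h i π hπ).1 (h j σ hσ).1 hcon
        rw [this, hhead]; rfl
      apply hnr
      refine ⟨j, hij, σ, hσ, by rw [hσh, hhead]; rfl, ?_, ?_⟩
      · exact fun L hL => (hstage (hbs hL)).1
      · rw [hhead]
        apply supLevel_lt_of (by simpa using Nat.lt_of_lt_of_le Nat.zero_lt_one h1)
        intro L hL
        have := (hstage (hbs hL)).2
        rw [litLevel_olit]; simp only [litLevel_ndef]; omega
  · intro l hl
    obtain ⟨h1, hmem⟩ := entry l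
    have htl : tlit J l = Lit.obj l := by simp [tlit, hl]
    rw [htl] at hmem
    obtain ⟨hd, -⟩ := hmem
    rcases hd with ⟨x, hx, hhead, hbody⟩ | ⟨l', -, habs⟩
    · refine ⟨x.1, x.2, hx.1, ?_, hhead, fun L hL => (hstage (hbody hL)).1, ?_⟩
      · rintro ⟨j, hij, σ, hσ, hsw, hsb', -⟩
        exact hx.2 ⟨j, hij, σ, hσ, hsw ▸ swap_mem_con _, coe_subset_star.2 hsb'⟩
      · rw [hhead]
        apply supLevel_lt_of (by simpa using Nat.lt_of_lt_of_le Nat.zero_lt_one h1)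
        intro L hL
        have := (hstage (hbody hL)).2
        rw [litLevel_olit]; simp only [litLevel_obj]; omega
    · exact absurd habs (by simp)

theorem WSd_to_extRD (h : noStrongDLP P) (hWS : isWSd P J) : isExtRD P J := by
  obtain ⟨hAtom, ℓ, Hmod, Hsup⟩ := hWS
  refine ⟨interp_of_atomic hAtom, ?_⟩
  have hTsub : ∀ k, TIter P J k ⊆ star J := by
    intro k
    induction k with
    | zero => simp [TIter]
    | succ k ih =>
      rintro L ⟨hd, -⟩
      rcases hd with ⟨x, hx, hhead, hbody⟩ | ⟨l, hlJ, rfl⟩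
      · have hsb : satBody J x.2.body := fun L' hL' =>
          mem_star_iff_satLit.1 (ih (hbody hL'))
        have hnr : ¬ RejWSd P J ℓ x.1 x.2 := by
          rintro ⟨j, hij, σ, hσ, hsw, hsb', -⟩
          exact hx.2 ⟨j, hij, σ, hσ, hsw ▸ swap_mem_con _, coe_subset_star.2 hsb'⟩
        exact hhead ▸ mem_star_iff_satLit.2 (Hmod x.1 x.2 hx.1 hnr hsb)
      · simpa using hlJ
  have hCheck : ∀ (p : ℕ) (c : Lit), c.olit = OLit.pos p → ¬ satLit J c →
      (∀ m < ℓ (OLit.pos p), ∀ q : ℕ, ℓ (OLit.pos q) ≤ m →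
        ∃ k, ∀ k' ≥ k, tlit J (OLit.pos q) ∈ TIter P J k') →
      ∃ M, ∀ k' ≥ M, ∀ j : Fin n, ∀ σ ∈ P j, σ.head = c →
        (↑σ.body : Set Lit) ⊆ star J → rejIn P (TIter P J k') j σ := by
    intro p c hco hcns IH
    have hstep : ∀ j : Fin n, ∃ m, (∃ σ ∈ P j, σ.head = c ∧ satBody J σ.body) →
        ∀ k' ≥ m, ∃ jj, j < jj ∧ ∃ τ ∈ P jj, τ.head ∈ con c ∧
          (↑τ.body : Set Lit) ⊆ TIter P J k' := by
      intro j
      by_cases hj : ∃ σ ∈ P j, σ.head = c ∧ satBody J σ.body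
      · obtain ⟨σ, hσ, hσh, hσb⟩ := hj
        have hrej := reject_of_unsat Hmod hσ hσb (hσh ▸ hcns)
        obtain ⟨jj, hjjj, τ, hτ, hτh, hτb, hτs⟩ := hrej
        rw [hσh, litLevel_olit, hco] at hτs
        have hpers : ∃ k, ∀ k' ≥ k, (↑τ.body : Set Lit) ⊆ TIter P J k' := by
          apply finset_persist
          intro L hL
          have hLat := (h jj τ hτ).2 L hL
          obtain ⟨q, hq⟩ := exists_pos_of_isAtom hLat
          have hsat : satLit J L := hτb L hL
          have hlev : ℓ (OLit.pos q) < ℓ (OLit.pos p) := by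
            have := litLevel_lt_of_supLevel hL hτs
            rw [litLevel_olit, hq] at this
            exact this
          obtain ⟨k, hk⟩ := IH _ hlev q le_rfl
          exact ⟨k, fun k' hk' => by
            rw [eq_tlit_of_satLit hsat, hq]; exact hk k' hk'⟩
        obtain ⟨m, hm⟩ := hpers
        refine ⟨m, fun _ k' hk' => ⟨jj, hjjj, τ, hτ, ?_, hm k' hk'⟩⟩
        rw [hτh, hσh]
        exact swap_mem_con c
      · exact ⟨0, fun hcon => absurd hcon hj⟩
    choose f hf using hstep
    refine ⟨Finset.univ.sup f, fun k' hk' j σ hσ hσh hσbs => ?_⟩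
    have hσb : satBody J σ.body := coe_subset_star.1 hσbs
    obtain ⟨jj, hjjj, τ, hτ, hτc, hτbT⟩ := hf j ⟨σ, hσ, hσh, hσb⟩ k'
      (le_trans (Finset.le_sup (Finset.mem_univ j)) hk')
    exact ⟨jj, hjjj, τ, hτ, by rw [hσh]; exact hτc, hτbT⟩
  have hPers : ∀ N : ℕ, ∀ p : ℕ, ℓ (OLit.pos p) ≤ N →
      ∃ k, ∀ k' ≥ k, tlit J (OLit.pos p) ∈ TIter P J k' := by
    intro N
    induction N using Nat.strong_induction_on with
    | _ N IH =>
    intro p hp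
    have IH' : ∀ m < ℓ (OLit.pos p), ∀ q : ℕ, ℓ (OLit.pos q) ≤ m →
        ∃ k, ∀ k' ≥ k, tlit J (OLit.pos q) ∈ TIter P J k' :=
      fun m hm q hq => IH m (lt_of_lt_of_le hm hp) q hq
    by_cases hpJ : OLit.pos p ∈ J
    · obtain ⟨i, π, hπ, hnr, hh, hsb, hsl⟩ := Hsup _ hpJ
      have hsl' : supLevel ℓ π.body < ℓ (OLit.pos p) := by
        rw [hh] at hsl; simpa using hsl
      obtain ⟨x, hx, hxh, hxb, hxs⟩ := support_remSet h Hmod hpJ hπ hh hsb hsl'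
      have hpers : ∃ k, ∀ k' ≥ k, (↑x.2.body : Set Lit) ⊆ TIter P J k' := by
        apply finset_persist
        intro L hL
        have hLat := (h x.1 x.2 hx.1).2 L hL
        obtain ⟨q, hq⟩ := exists_pos_of_isAtom hLat
        have hsat : satLit J L := hxb L hL
        have hlev : ℓ (OLit.pos q) < ℓ (OLit.pos p) := by
          have := litLevel_lt_of_supLevel hL hxs
          rw [litLevel_olit, hq] at this
          exact this
        obtain ⟨k, hk⟩ := IH' _ hlev q le_rfl
        exact ⟨k, fun k' hk' => by
          rw [eq_tlit_of_satLit hsat, hq]; exact hk k' hk'⟩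
      obtain ⟨k1, hk1⟩ := hpers
      obtain ⟨M, hM⟩ := hCheck p (Lit.ndef (OLit.pos p)) rfl (by simp [hpJ]) IH'
      refine ⟨max k1 M + 1, fun k'' hk'' => ?_⟩
      obtain ⟨k', rfl⟩ : ∃ k', k'' = k' + 1 := ⟨k'' - 1, by omega⟩
      have hk1' : k1 ≤ k' := by omega
      have hM' : M ≤ k' := by omega
      have htl : tlit J (OLit.pos p) = Lit.obj (OLit.pos p) := by simp [tlit, hpJ]
      rw [htl]
      refine ⟨Or.inl ⟨x, hx, hxh, hk1 k' hk1'⟩, ?_⟩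
      rintro ⟨y, hy, hyc, hybs⟩
      have hyh : y.2.head = Lit.ndef (OLit.pos p) := by
        have := eq_swap_of_mem_con (by simp [Lit.olit, OLit.isAtom])
          (h y.1 y.2 hy.1).1 hyc
        simpa using this
      exact absurd (hM k' hM' y.1 y.2 hy.1 hyh hybs) hy.2
    · obtain ⟨M, hM⟩ := hCheck p (Lit.obj (OLit.pos p)) rfl (by simpa) IH'
      refine ⟨M + 1, fun k'' hk'' => ?_⟩
      obtain ⟨k', rfl⟩ : ∃ k', k'' = k' + 1 := ⟨k'' - 1, by omega⟩
      have hM' : M ≤ k' := by omega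
      have htl : tlit J (OLit.pos p) = Lit.ndef (OLit.pos p) := by simp [tlit, hpJ]
      rw [htl]
      refine ⟨Or.inr ⟨OLit.pos p, hpJ, rfl⟩, ?_⟩
      rintro ⟨y, hy, hyc, hybs⟩
      have hyh : y.2.head = Lit.obj (OLit.pos p) := by
        have := eq_swap_of_mem_con (by simp [Lit.olit, OLit.isAtom])
          (h y.1 y.2 hy.1).1 hyc
        simpa using this
      exact absurd (hM k' hM' y.1 y.2 hy.1 hyh hybs) hy.2
  have hNeg : ∀ q : ℕ, ∀ k' ≥ 1, Lit.ndef (OLit.neg q) ∈ TIter P J k' := by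
    intro q k' hk'
    obtain ⟨m, rfl⟩ : ∃ m, k' = m + 1 := ⟨k' - 1, by omega⟩
    have hq : OLit.neg q ∉ J := by
      intro hc
      obtain ⟨r, hr⟩ := hAtom _ hc
      cases hr
    refine ⟨Or.inr ⟨OLit.neg q, hq, rfl⟩, ?_⟩
    rintro ⟨y, hy, hyc, -⟩
    have hat := (h y.1 y.2 hy.1).1
    simp only [con, Finset.mem_singleton] at hyc
    rw [hyc] at hat
    exact hat
  apply Set.Subset.antisymm
  · intro L hL
    cases L with
    | obj l =>
      have hlJ : l ∈ J := obj_mem_star.1 hL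
      obtain ⟨p, rfl⟩ := hAtom l hlJ
      obtain ⟨k, hk⟩ := hPers (ℓ (OLit.pos p)) p le_rfl
      have htl : tlit J (OLit.pos p) = Lit.obj (OLit.pos p) := by simp [tlit, hlJ]
      exact Set.mem_iUnion.2 ⟨k, htl ▸ hk k le_rfl⟩
    | ndef l =>
      have hlJ : l ∉ J := ndef_mem_star.1 hL
      cases l with
      | pos p =>
        obtain ⟨k, hk⟩ := hPers (ℓ (OLit.pos p)) p le_rfl
        have htl : tlit J (OLit.pos p) = Lit.ndef (OLit.pos p) := by simp [tlit, hlJ]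
        exact Set.mem_iUnion.2 ⟨k, htl ▸ hk k le_rfl⟩
      | neg q =>
        exact Set.mem_iUnion.2 ⟨1, hNeg q 1 le_rfl⟩
  · exact Set.iUnion_subset hTsub

end
/-- for DLPs without strong negation,
WS'(P) = RD'(P) = WSd(P) = RD(P). -/
theorem extended_semantics_coincide_with_regular (n : ℕ) (P : Fin n → Set Rule)
    (h : noStrongDLP P) :
    {J : Set OLit | isExtWS P J} = {J : Set OLit | isExtRD P J} ∧
    {J : Set OLit | isExtWS P J} = {J : Set OLit | isWSd P J} ∧
    {J : Set OLit | isExtWS P J} = {J : Set OLit | isRD P J} := by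
  have e1 : ∀ J : Set OLit, isExtWS P J ↔ isWSd P J := fun _ => extWS_iff_WSd h
  have e2 : ∀ J : Set OLit, isWSd P J ↔ isRD P J := fun _ => WSd_iff_RD h
  have e3 : ∀ J : Set OLit, isExtRD P J ↔ isWSd P J :=
    fun _ => ⟨extRD_to_WSd h, WSd_to_extRD h⟩
  refine ⟨?_, ?_, ?_⟩ <;> ext J <;> simp only [Set.mem_setOf_eq]
  · rw [e1 J, ← e3 J]
  · exact e1 J
  · rw [e1 J]; exact e2 J

end RuleUpdates
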